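/- Let V = {1, 2, 3, 4, 5, 6, 7} and let T be the tree with four nodes labeled by the clusters K1 = {1,2,3,5}, K2 = {1,2,3,4}, K3 = {1,3,4,6}, K4 = {1,2,4,7}, in which K2 is adjacent to each of K1, K3, K4 (so the separators are {1,2,3}, {1,3,4}, {1,2,4}). Then T is a 4-order cherry tree on V, but T is not a truncated R-vine at level 4: there is no cherry-vine sequence T_2, T_3, T_4 on V with T_4 = T. In particular, not every cherry tree is the top tree of a truncated R-vine. -/

import Mathlib

/-- A junction tree on a vertex set `V`: a finite tree `G` with nodes labeled by
clusters (finite subsets of `V`), such that no cluster is contained in the cluster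
of another node and the running intersection property holds.  (The covering
condition "the clusters cover `V`" is stated separately as `JTree.CoversAll`,
so that junction trees on subsets of `V`, such as the tree formed by the
separators, can be treated uniformly.) -/
structure JTree (V : Type) [DecidableEq V] where
  ι : Type
  [fin : Fintype ι]
  [deq : DecidableEq ι]
  G : SimpleGraph ι
  isTree : G.IsTree
  C : ι → Finset V
  noSub : ∀ i j : ι, i ≠ j → ¬ C i ⊆ C j
  rip : ∀ (i j : ι) (p : G.Walk i j), p.IsPath → ∀ x ∈ p.support, C i ∩ C j ⊆ C x

attribute [instance] JTree.fin JTree.deq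

namespace JTree

variable {V : Type} [DecidableEq V]

/-- The clusters cover all of `V`: the junction tree is a junction tree "on `V`". -/
def CoversAll (T : JTree V) : Prop := ∀ v : V, ∃ i, v ∈ T.C i

/-- `T` is a `k`-order cherry tree: every cluster has exactly `k` elements and
every edge-separator has exactly `k - 1` elements. -/
def IsCherry (T : JTree V) (k : ℕ) : Prop :=
  (∀ i, (T.C i).card = k) ∧ ∀ i j, T.G.Adj i j → (T.C i ∩ T.C j).card = k - 1

/-- The set of (distinct) separators of `T`. -/
def separators (T : JTree V) : Set (Finset V) :=
  { s | ∃ i j, T.G.Adj i j ∧ s = T.C i ∩ T.C j }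

/-- The separators of `T` form a `(k-1)`-order cherry tree: there is a junction
tree whose set of clusters is exactly the set of distinct separators of `T`, in
which every cluster has `k - 1` elements and every edge-separator has `k - 2`
elements. -/
def SeparatorsFormCherry (T : JTree V) (k : ℕ) : Prop :=
  ∃ T' : JTree V, T'.IsCherry (k - 1) ∧ Set.range T'.C = T.separators

/-- Every cluster of `T'` is the union of two clusters that are adjacent in `T`. -/
def Succ (T T' : JTree V) : Prop :=
  ∀ i' : T'.ι, ∃ i j : T.ι, T.G.Adj i j ∧ T'.C i' = T.C i ∪ T.C j

/-- `T` is a truncated R-vine at level `k`: there exists a cherry-vine sequence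
`T₂, …, T_k` on `V` (with `T_m` an `m`-order cherry tree on `V` and each cluster of
`T_{m+1}` the union of two adjacent clusters of `T_m`) whose top tree `T_k` is `T`. -/
def IsTruncatedRVine (T : JTree V) (k : ℕ) : Prop :=
  ∃ Ts : ℕ → JTree V,
    (∀ m, 2 ≤ m → m ≤ k → (Ts m).CoversAll ∧ (Ts m).IsCherry m) ∧
    (∀ m, 2 ≤ m → m < k → Succ (Ts m) (Ts (m + 1))) ∧
    Ts k = T

/-- The separator attached to an edge of the tree, as a function on `Sym2`. -/
noncomputable def sep (T : JTree V) : Sym2 T.ι → Finset V :=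
  Sym2.lift ⟨fun i j => T.C i ∩ T.C j, fun _ _ => Finset.inter_comm _ _⟩

/-- The (finite) set of edges of the tree underlying `T`. -/
noncomputable def edgeFinset (T : JTree V) : Finset (Sym2 T.ι) :=
  Set.Finite.toFinset (Set.toFinite T.G.edgeSet)

end JTree

/- The vertex set `V = {1,…,7}` is modeled as `Fin 7` via `i ↦ i - 1`;
thus `K1 = {1,2,3,5}`, `K2 = {1,2,3,4}`, `K3 = {1,3,4,6}`, `K4 = {1,2,4,7}`
become the following finsets. -/
def K1 : Finset (Fin 7) := {0, 1, 2, 4}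
def K2 : Finset (Fin 7) := {0, 1, 2, 3}
def K3 : Finset (Fin 7) := {0, 2, 3, 5}
def K4 : Finset (Fin 7) := {0, 1, 3, 6}

open SimpleGraph Walk


open SimpleGraph Walk

section TreeLemmas

variable {ι : Type} [DecidableEq ι] {G : SimpleGraph ι}

lemma path_concat {x y z : ι} {p : G.Walk x y} (hp : p.IsPath) (h : G.Adj y z)
    (hz : z ∉ p.support) : (p.concat h).IsPath := by
  rw [← isPath_reverse_iff, reverse_concat, cons_isPath_iff]
  refine ⟨(isPath_reverse_iff _).mpr hp, ?_⟩
  rwa [support_reverse, List.mem_reverse]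

lemma gate_exists (hT : G.IsTree) {a b : ι} (hab : G.Adj a b) (u : ι) :
    ∃ g, (g = a ∨ g = b) ∧
      (∀ p : G.Walk u a, p.IsPath → g ∈ p.support) ∧
      (∀ p : G.Walk u b, p.IsPath → g ∈ p.support) := by
  obtain ⟨t, ht, hun⟩ := hT.existsUnique_path u a
  by_cases hb : b ∈ t.support
  · exact ⟨b, Or.inr rfl, fun p hp => by rw [hun p hp]; exact hb,
      fun p hp => p.end_mem_support⟩
  · refine ⟨a, Or.inl rfl, fun p hp => p.end_mem_support, fun p hp => ?_⟩
    obtain ⟨s, hs, hus⟩ := hT.existsUnique_path u b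
    have h1 : (t.concat hab).IsPath := path_concat ht hab hb
    rw [hus p hp, ← hus _ h1]
    rw [support_concat, List.mem_append]
    exact Or.inl t.end_mem_support

lemma gate_const (hT : G.IsTree) {a b u v : ι}
    (hab : G.Adj a b) (huv : G.Adj u v) (hne : s(u, v) ≠ s(a, b))
    (h : ∀ p : G.Walk u a, p.IsPath → b ∈ p.support) :
    ∀ p : G.Walk v a, p.IsPath → b ∈ p.support := by
  obtain ⟨t, ht, htu⟩ := hT.existsUnique_path u a
  have hbt : b ∈ t.support := h t ht
  -- the suffix of t from b is the single edge b-a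
  have hd : t.dropUntil b hbt = Walk.cons hab.symm Walk.nil := by
    obtain ⟨s, hs, hus⟩ := hT.existsUnique_path b a
    have h1 : (Walk.cons hab.symm (Walk.nil : G.Walk a a)).IsPath := by
      rw [cons_isPath_iff]
      refine ⟨Walk.IsPath.nil, ?_⟩
      simp [hab.ne']
    rw [hus _ (ht.dropUntil hbt), hus _ h1]
  have hsplit := t.take_spec hbt
  rw [hd] at hsplit
  set t' := t.takeUntil b hbt with ht'def
  have ht'p : t'.IsPath := ht.takeUntil hbt
  have hat' : a ∉ t'.support := by
    have hnd := ht.support_nodup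
    rw [← hsplit, support_append] at hnd
    simp only [support_cons, support_nil, List.tail_cons] at hnd
    exact fun ha => (List.disjoint_of_nodup_append hnd) ha (by simp)
  -- build a path from v to a containing b
  suffices hex : ∃ w : G.Walk v a, w.IsPath ∧ b ∈ w.support by
    obtain ⟨w, hw, hbw⟩ := hex
    intro p hp
    obtain ⟨s, hs, hus⟩ := hT.existsUnique_path v a
    rw [hus p hp, ← hus w hw]
    exact hbw
  by_cases hv : v ∈ t.support
  · by_cases hva : v = a
    · subst hva
      -- u is adjacent to a, so t is the single edge u-a, so b = u : contradiction
      exfalso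
      have h1 : (Walk.cons huv (Walk.nil : G.Walk v v)).IsPath := by
        rw [cons_isPath_iff]
        refine ⟨Walk.IsPath.nil, ?_⟩
        simp [huv.ne]
      have := htu _ h1
      rw [← this] at hbt
      simp only [support_cons, support_nil, List.mem_cons, List.not_mem_nil, or_false] at hbt
      rcases hbt with rfl | rfl
      · exact hne (by rw [Sym2.eq_swap])
      · exact hab.ne' rfl
    · have hvt' : v ∈ t'.support := by
        rw [← hsplit, mem_support_append_iff] at hv
        rcases hv with hv | hv
        · exact hv
        · simp only [support_cons, support_nil, List.mem_cons, List.not_mem_nil, or_false] at hv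
          rcases hv with rfl | rfl
          · exact t'.end_mem_support
          · exact absurd rfl hva
      refine ⟨(t'.dropUntil v hvt').concat hab.symm, ?_, ?_⟩
      · refine path_concat (ht'p.dropUntil hvt') hab.symm ?_
        exact fun ha => hat' (t'.support_dropUntil_subset hvt' ha)
      · rw [support_concat, List.mem_append]
        exact Or.inl (t'.dropUntil v hvt').end_mem_support
  · refine ⟨Walk.cons huv.symm t, ?_, ?_⟩
    · rw [cons_isPath_iff]; exact ⟨ht, hv⟩
    · rw [support_cons]; exact List.mem_cons_of_mem _ hbt

lemma edge_gate (hT : G.IsTree) {a1 b1 a2 b2 : ι}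
    (h1 : G.Adj a1 b1) (h2 : G.Adj a2 b2) (hne : s(a1, b1) ≠ s(a2, b2)) :
    ∃ g, (g = a2 ∨ g = b2) ∧
      ∀ u, (u = a1 ∨ u = b1) → ∀ w, (w = a2 ∨ w = b2) →
        ∀ p : G.Walk u w, p.IsPath → g ∈ p.support := by
  obtain ⟨g, hg, hga, hgb⟩ := gate_exists hT h2 a1
  rcases hg with rfl | rfl
  · have hb1 : ∀ p : G.Walk b1 b2, p.IsPath → g ∈ p.support := by
      refine gate_const hT h2.symm h1 ?_ hgb
      intro hs; apply hne; rw [hs, Sym2.eq_swap]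
    refine ⟨g, Or.inl rfl, ?_⟩
    rintro u (rfl | rfl) w (rfl | rfl) p hp
    · exact hga p hp
    · exact hgb p hp
    · exact p.end_mem_support
    · exact hb1 p hp
  · have hb1 : ∀ p : G.Walk b1 a2, p.IsPath → g ∈ p.support := by
      exact gate_const hT h2 h1 hne hga
    refine ⟨g, Or.inr rfl, ?_⟩
    rintro u (rfl | rfl) w (rfl | rfl) p hp
    · exact hga p hp
    · exact p.end_mem_support
    · exact hb1 p hp
    · exact p.end_mem_support

end TreeLemmas
section KeyLemma

variable {V : Type} [DecidableEq V]

lemma key_gate (T : JTree V) {a1 b1 a2 b2 : T.ι}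
    (h1 : T.G.Adj a1 b1) (h2 : T.G.Adj a2 b2)
    (hne : T.C a1 ∪ T.C b1 ≠ T.C a2 ∪ T.C b2) :
    ∃ g, (g = a2 ∨ g = b2) ∧ (T.C a1 ∪ T.C b1) ∩ (T.C a2 ∪ T.C b2) ⊆ T.C g := by
  have hs : s(a1, b1) ≠ s(a2, b2) := by
    intro h
    rw [Sym2.eq_iff] at h
    apply hne
    rcases h with ⟨rfl, rfl⟩ | ⟨rfl, rfl⟩
    · rfl
    · exact Finset.union_comm _ _
  obtain ⟨g, hg, hall⟩ := edge_gate T.isTree h1 h2 hs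
  refine ⟨g, hg, ?_⟩
  intro x hx
  rw [Finset.mem_inter] at hx
  obtain ⟨hx1, hx2⟩ := hx
  rw [Finset.mem_union] at hx1 hx2
  obtain ⟨u, hu, hxu⟩ : ∃ u, (u = a1 ∨ u = b1) ∧ x ∈ T.C u := by
    rcases hx1 with h | h
    · exact ⟨a1, Or.inl rfl, h⟩
    · exact ⟨b1, Or.inr rfl, h⟩
  obtain ⟨w, hw, hxw⟩ : ∃ w, (w = a2 ∨ w = b2) ∧ x ∈ T.C w := by
    rcases hx2 with h | h
    · exact ⟨a2, Or.inl rfl, h⟩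
    · exact ⟨b2, Or.inr rfl, h⟩
  obtain ⟨p, hp, -⟩ := T.isTree.existsUnique_path u w
  exact T.rip u w p hp g (hall u hu w hw p hp) (Finset.mem_inter.mpr ⟨hxu, hxw⟩)

end KeyLemma

/-! ### The concrete star cherry tree -/

def starG : SimpleGraph (Fin 4) where
  Adj i j := i ≠ j ∧ (i = 1 ∨ j = 1)
  symm := ⟨fun i j h => ⟨Ne.symm h.1, h.2.symm⟩⟩
  loopless := ⟨fun i h => h.1 rfl⟩

def Cstar : Fin 4 → Finset (Fin 7) := ![K1, K2, K3, K4]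

lemma star_support {i j : Fin 4} (p : starG.Walk i j) (hp : p.IsPath) :
    ∀ x ∈ p.support, x = i ∨ x = j ∨ x = 1 := by
  induction p with
  | nil => intro x hx; rw [support_nil, List.mem_singleton] at hx; exact Or.inl hx
  | @cons i y j h q ih =>
    intro x hx
    rw [support_cons, List.mem_cons] at hx
    rw [cons_isPath_iff] at hp
    obtain ⟨hq, hiq⟩ := hp
    rcases hx with rfl | hx
    · exact Or.inl rfl
    · by_cases hy : y = 1
      · rcases ih hq x hx with rfl | h' | h'
        · exact Or.inr (Or.inr hy)
        · exact Or.inr (Or.inl h')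
        · exact Or.inr (Or.inr h')
      · have hi1 : i = 1 := h.2.resolve_right hy
        cases q with
        | nil =>
          rw [support_nil, List.mem_singleton] at hx
          exact Or.inr (Or.inl hx)
        | @cons _ z _ h2 q2 =>
          exfalso
          have hz : z = 1 := h2.2.resolve_left hy
          apply hiq
          rw [support_cons]
          apply List.mem_cons_of_mem
          rw [hi1, ← hz]
          exact q2.start_mem_support

lemma starG_isTree : starG.IsTree := by
  have hreach : ∀ u : Fin 4, starG.Reachable u 1 := by
    intro u
    by_cases h : u = 1
    · subst h; exact Reachable.refl 1
    · exact (show starG.Adj u 1 from ⟨h, Or.inr rfl⟩).reachable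
  constructor
  · rw [connected_iff]
    exact ⟨fun u v => (hreach u).trans (hreach v).symm, ⟨1⟩⟩
  · intro v c hc
    cases c with
    | nil => exact hc.ne_nil rfl
    | @cons _ y _ h q =>
      have hlen : 3 ≤ (Walk.cons h q).length := hc.three_le_length
      rw [cons_isCycle_iff] at hc
      obtain ⟨hq, -⟩ := hc
      rw [length_cons] at hlen
      have hsub := star_support q hq
      have hnd : q.support.Nodup := hq.support_nodup
      have hslen : 3 ≤ q.support.length := by rw [length_support]; omega
      have hcard : q.support.toFinset.card = q.support.length :=
        List.toFinset_card_of_nodup hnd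
      have hcontra : ∀ c : Fin 4, (∀ x ∈ q.support, x = c ∨ x = 1) → False := by
        intro c hc'
        have hsub2 : q.support.toFinset ⊆ {c, (1 : Fin 4)} := by
          intro x hx
          rw [List.mem_toFinset] at hx
          rcases hc' x hx with rfl | rfl <;> simp
        have h2 := Finset.card_le_card hsub2
        have h3 : ({c, (1 : Fin 4)} : Finset (Fin 4)).card ≤ 2 :=
          le_trans (Finset.card_insert_le _ _) (by simp)
        omega
      rcases h.2 with hv1 | hy1
      · refine hcontra y (fun x hx => ?_)
        rcases hsub x hx with rfl | rfl | rfl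
        · exact Or.inl rfl
        · exact Or.inr hv1
        · exact Or.inr rfl
      · refine hcontra v (fun x hx => ?_)
        rcases hsub x hx with rfl | rfl | rfl
        · exact Or.inr hy1
        · exact Or.inl rfl
        · exact Or.inr rfl

def Tstar : JTree (Fin 7) where
  ι := Fin 4
  G := starG
  isTree := starG_isTree
  C := Cstar
  noSub := by decide
  rip := by
    intro i j p hp x hx
    by_cases hij : i = j
    · subst hij
      cases p with
      | nil =>
        rw [support_nil, List.mem_singleton] at hx
        subst hx
        exact Finset.inter_subset_left
      | cons h q => exact absurd q.end_mem_support ((cons_isPath_iff _ _).mp hp).2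
    · rcases star_support p hp x hx with rfl | rfl | rfl
      · exact Finset.inter_subset_left
      · exact Finset.inter_subset_right
      · exact (by decide : ∀ i j : Fin 4, i ≠ j → Cstar i ∩ Cstar j ⊆ Cstar 1) i j hij

/-- the tree with four nodes labeled `K1, K2, K3, K4`, with `K2`
adjacent to each of `K1, K3, K4`, is a 4-order cherry tree on `V = {1,…,7}` but is
not a truncated R-vine at level 4; in particular not every cherry tree is the top
tree of a truncated R-vine. -/
theorem star_cherry_tree_not_truncated_rvine :
    ∃ T : JTree (Fin 7), ∃ e : Fin 4 ≃ T.ι,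
      T.C (e 0) = K1 ∧ T.C (e 1) = K2 ∧ T.C (e 2) = K3 ∧ T.C (e 3) = K4 ∧
      (∀ i j : Fin 4, T.G.Adj (e i) (e j) ↔ i ≠ j ∧ (i = 1 ∨ j = 1)) ∧
      T.CoversAll ∧ T.IsCherry 4 ∧ ¬ T.IsTruncatedRVine 4 := by
  refine ⟨Tstar, Equiv.refl _, by decide, by decide, by decide, by decide,
    fun i j => Iff.rfl, ?_, ?_, ?_⟩
  · exact fun v => (by decide : ∀ v : Fin 7, ∃ i : Fin 4, v ∈ Cstar i) v
  · refine ⟨fun i => (by decide : ∀ i : Fin 4, (Cstar i).card = 4) i, fun i j h => ?_⟩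
    exact (by decide : ∀ i j : Fin 4, (i ≠ j ∧ (i = 1 ∨ j = 1)) →
      (Cstar i ∩ Cstar j).card = 3) i j h
  · rintro ⟨Ts, hmem, hsucc, htop⟩
    have hch : (Ts 3).IsCherry 3 := (hmem 3 (by norm_num) (by norm_num)).2
    have hs : JTree.Succ (Ts 3) (Ts 4) := hsucc 3 (by norm_num) (by norm_num)
    rw [htop] at hs
    set T3 := Ts 3 with hT3
    have hs' : ∀ i' : Fin 4, ∃ i j, T3.G.Adj i j ∧ Cstar i' = T3.C i ∪ T3.C j := hs
    obtain ⟨a1, b1, hadj1, hu1⟩ := hs' 0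
    obtain ⟨a2, b2, hadj2, hu2⟩ := hs' 1
    obtain ⟨a3, b3, hadj3, hu3⟩ := hs' 2
    obtain ⟨a4, b4, hadj4, hu4⟩ := hs' 3
    obtain ⟨g1, hg1, hsub1⟩ := key_gate T3 hadj1 hadj2 (by rw [← hu1, ← hu2]; decide)
    obtain ⟨g3, hg3, hsub3⟩ := key_gate T3 hadj3 hadj2 (by rw [← hu3, ← hu2]; decide)
    obtain ⟨g4, hg4, hsub4⟩ := key_gate T3 hadj4 hadj2 (by rw [← hu4, ← hu2]; decide)
    rw [← hu1, ← hu2] at hsub1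
    rw [← hu3, ← hu2] at hsub3
    rw [← hu4, ← hu2] at hsub4
    have hc1 : Cstar 0 ∩ Cstar 1 = T3.C g1 :=
      Finset.eq_of_subset_of_card_le hsub1 (by rw [hch.1 g1]; decide)
    have hc3 : Cstar 2 ∩ Cstar 1 = T3.C g3 :=
      Finset.eq_of_subset_of_card_le hsub3 (by rw [hch.1 g3]; decide)
    have hc4 : Cstar 3 ∩ Cstar 1 = T3.C g4 :=
      Finset.eq_of_subset_of_card_le hsub4 (by rw [hch.1 g4]; decide)
    rcases hg1 with rfl | rfl <;> rcases hg3 with rfl | rfl <;> rcases hg4 with rfl | rfl <;>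
      first
        | exact absurd (hc1.trans hc3.symm) (by decide)
        | exact absurd (hc1.trans hc4.symm) (by decide)
        | exact absurd (hc3.trans hc4.symm) (by decide)
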